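/- Let R_{b1}(z,w) = (w − z²)² / ((w + 3z²)(z − 1)(z − w)), defined and complex-differentiable on the open set where (w + 3z²)(z − 1)(z − w) ≠ 0, and let G(z,w) = (w + 3z²)(z − 1)(z − w)/(w − z²)² = 1/R_{b1}, defined and complex-differentiable where w ≠ z². Then: (1) the complex derivative (gradient) of R_{b1} vanishes at (0, −1) and at (1/3, 1), and R_{b1}(0, −1) = 1, R_{b1}(1/3, 1) = 4/3; (2) the complex derivative of G vanishes at (1, −3) and at (−1/3, −1/3), and G(1, −3) = G(−1/3, −1/3) = 0. -/

import Mathlib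

set_option maxHeartbeats 1000000 in
/-- The true critical points of the integral `R_{b1}` of the type b1 dual billiard:
`(0,−1)` with value `1`, `(1/3, 1)` with value `4/3`, and the critical points
`(1,−3)`, `(−1/3,−1/3)` of `G = 1/R_{b1}` with value `0` (i.e. value `∞` of `R_{b1}`). -/
theorem stmt_7 (R G : ℂ × ℂ → ℂ)
    (hR : ∀ p : ℂ × ℂ, R p =
      (p.2 - p.1 ^ 2) ^ 2 / ((p.2 + 3 * p.1 ^ 2) * (p.1 - 1) * (p.1 - p.2)))
    (hG : ∀ p : ℂ × ℂ, G p =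
      ((p.2 + 3 * p.1 ^ 2) * (p.1 - 1) * (p.1 - p.2)) / (p.2 - p.1 ^ 2) ^ 2) :
    (fderiv ℂ R (0, -1) = 0 ∧ R (0, -1) = 1) ∧
    (fderiv ℂ R (1/3, 1) = 0 ∧ R (1/3, 1) = 4/3) ∧
    (fderiv ℂ G (1, -3) = 0 ∧ G (1, -3) = 0) ∧
    (fderiv ℂ G (-1/3, -1/3) = 0 ∧ G (-1/3, -1/3) = 0) := by
  have hRf : R = fun p : ℂ × ℂ =>
      (p.2 - p.1 ^ 2) ^ 2 / ((p.2 + 3 * p.1 ^ 2) * (p.1 - 1) * (p.1 - p.2)) := funext hR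
  have hGf : G = fun p : ℂ × ℂ =>
      ((p.2 + 3 * p.1 ^ 2) * (p.1 - 1) * (p.1 - p.2)) / (p.2 - p.1 ^ 2) ^ 2 := funext hG
  subst hRf hGf
  refine ⟨⟨?_, by norm_num⟩, ⟨?_, by norm_num⟩, ⟨?_, by norm_num⟩, ⟨?_, by norm_num⟩⟩
  · set q : ℂ × ℂ := (0, -1) with hq
    simp only [pow_two, div_eq_mul_inv]
    have h1 : HasFDerivAt (fun p : ℂ × ℂ => p.1) (ContinuousLinearMap.fst ℂ ℂ ℂ) q :=
      hasFDerivAt_fst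
    have h2 : HasFDerivAt (fun p : ℂ × ℂ => p.2) (ContinuousLinearMap.snd ℂ ℂ ℂ) q :=
      hasFDerivAt_snd
    have hnum := (h2.sub (h1.mul h1)).mul (h2.sub (h1.mul h1))
    have hden := ((h2.add ((h1.mul h1).const_mul 3)).mul (h1.sub_const 1)).mul (h1.sub h2)
    have hd0 : (q.2 + 3 * (q.1 * q.1)) * (q.1 - 1) * (q.1 - q.2) ≠ 0 := by norm_num [hq]
    have hinv : HasFDerivAt (fun p : ℂ × ℂ =>
        ((p.2 + 3 * (p.1 * p.1)) * (p.1 - 1) * (p.1 - p.2))⁻¹)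
        (_ • _) q := (hasDerivAt_inv hd0).comp_hasFDerivAt q hden
    have h := hnum.mul hinv
    refine h.fderiv.trans ?_
    ext v <;> simp [hq] <;> norm_num
  · set q : ℂ × ℂ := (1/3, 1) with hq
    simp only [pow_two, div_eq_mul_inv]
    have h1 : HasFDerivAt (fun p : ℂ × ℂ => p.1) (ContinuousLinearMap.fst ℂ ℂ ℂ) q :=
      hasFDerivAt_fst
    have h2 : HasFDerivAt (fun p : ℂ × ℂ => p.2) (ContinuousLinearMap.snd ℂ ℂ ℂ) q :=
      hasFDerivAt_snd
    have hnum := (h2.sub (h1.mul h1)).mul (h2.sub (h1.mul h1))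
    have hden := ((h2.add ((h1.mul h1).const_mul 3)).mul (h1.sub_const 1)).mul (h1.sub h2)
    have hd0 : (q.2 + 3 * (q.1 * q.1)) * (q.1 - 1) * (q.1 - q.2) ≠ 0 := by norm_num [hq]
    have hinv : HasFDerivAt (fun p : ℂ × ℂ =>
        ((p.2 + 3 * (p.1 * p.1)) * (p.1 - 1) * (p.1 - p.2))⁻¹)
        (_ • _) q := (hasDerivAt_inv hd0).comp_hasFDerivAt q hden
    have h := hnum.mul hinv
    refine h.fderiv.trans ?_
    ext v <;> simp [hq] <;> norm_num
  · set q : ℂ × ℂ := (1, -3) with hq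
    simp only [pow_two, div_eq_mul_inv]
    have h1 : HasFDerivAt (fun p : ℂ × ℂ => p.1) (ContinuousLinearMap.fst ℂ ℂ ℂ) q :=
      hasFDerivAt_fst
    have h2 : HasFDerivAt (fun p : ℂ × ℂ => p.2) (ContinuousLinearMap.snd ℂ ℂ ℂ) q :=
      hasFDerivAt_snd
    have hnum := (h2.sub (h1.mul h1)).mul (h2.sub (h1.mul h1))
    have hden := ((h2.add ((h1.mul h1).const_mul 3)).mul (h1.sub_const 1)).mul (h1.sub h2)
    have hn0 : (q.2 - q.1 * q.1) * (q.2 - q.1 * q.1) ≠ 0 := by norm_num [hq]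
    have hinv : HasFDerivAt (fun p : ℂ × ℂ =>
        ((p.2 - p.1 * p.1) * (p.2 - p.1 * p.1))⁻¹)
        (_ • _) q := (hasDerivAt_inv hn0).comp_hasFDerivAt q hnum
    have h := hden.mul hinv
    refine h.fderiv.trans ?_
    ext v <;> simp [hq] <;> norm_num
  · set q : ℂ × ℂ := (-1/3, -1/3) with hq
    simp only [pow_two, div_eq_mul_inv]
    have h1 : HasFDerivAt (fun p : ℂ × ℂ => p.1) (ContinuousLinearMap.fst ℂ ℂ ℂ) q :=
      hasFDerivAt_fst
    have h2 : HasFDerivAt (fun p : ℂ × ℂ => p.2) (ContinuousLinearMap.snd ℂ ℂ ℂ) q :=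
      hasFDerivAt_snd
    have hnum := (h2.sub (h1.mul h1)).mul (h2.sub (h1.mul h1))
    have hden := ((h2.add ((h1.mul h1).const_mul 3)).mul (h1.sub_const 1)).mul (h1.sub h2)
    have hn0 : (q.2 - q.1 * q.1) * (q.2 - q.1 * q.1) ≠ 0 := by norm_num [hq]
    have hinv : HasFDerivAt (fun p : ℂ × ℂ =>
        ((p.2 - p.1 * p.1) * (p.2 - p.1 * p.1))⁻¹)
        (_ • _) q := (hasDerivAt_inv hn0).comp_hasFDerivAt q hnum
    have h := hden.mul hinv
    refine h.fderiv.trans ?_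
    ext v <;> simp [hq] <;> norm_num
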